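/- Let G be a finite group with a shift structure ({X_j}, Y_0, φ) of depth ℓ. Then G is solvable if and only if the subgroup X_0 is solvable. -/

import Mathlib

/-- A finite group `G` has a *shift structure* `({X_j}, Y₀, φ)` of depth `ℓ ≥ 1`
(indices shifted by one, so `X j` here is the paper's `X_{j-1}`). -/
structure IsShiftStructure {G : Type*} [Group G] [Finite G] (ℓ : ℕ)
    (X : ℕ → Subgroup G) (Y0 : Subgroup G) [Y0.Normal] [(X 1).Normal]
    (φ : (G ⧸ Y0) ≃* (G ⧸ X 1)) : Prop where
  one_le : 1 ≤ ℓ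
  bot_eq : X 0 = ⊥
  top_eq : X (ℓ + 1) = ⊤
  mono : ∀ j, X j ≤ X (j + 1)
  norm : ∀ j, (X j).Normal
  compat : ∀ j ≤ ℓ,
    Subgroup.map φ.toMonoidHom (Subgroup.map (QuotientGroup.mk' Y0) (X j ⊔ Y0)) =
      Subgroup.map (QuotientGroup.mk' (X 1)) (X (j + 1))

/-- a group with a shift structure is solvable iff `X_0` (here `X 1`,
indices being shifted by one) is solvable. -/
theorem shift_structure_solvable_iff {G : Type*} [Group G] [Finite G] (ℓ : ℕ)
    (X : ℕ → Subgroup G) (Y0 : Subgroup G) [Y0.Normal] [(X 1).Normal]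
    (φ : (G ⧸ Y0) ≃* (G ⧸ X 1)) (h : IsShiftStructure ℓ X Y0 φ) :
    IsSolvable G ↔ IsSolvable ↥(X 1) := by
  constructor
  · intro hG; haveI : Group.IsSolvable G := hG; exact (inferInstance : Group.IsSolvable ↥(X 1))
  · intro hX
    haveI : Group.IsSolvable ↥(X 1) := hX
    have hmono : Monotone X := monotone_nat_of_le_succ h.mono
    have key : ∀ j, j ≤ ℓ → Group.IsSolvable ↥(X (j + 1)) := by
      intro j
      induction j with
      | zero => intro _; exact hX
      | succ k ih =>
        intro hk
        have hsk : Group.IsSolvable ↥(X (k + 1)) := ih (Nat.le_of_succ_le hk)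
        have h1 : Subgroup.map (QuotientGroup.mk' Y0) (X (k + 1) ⊔ Y0)
            = Subgroup.map (QuotientGroup.mk' Y0) (X (k + 1)) := by
          rw [Subgroup.map_sup]
          have hb : Subgroup.map (QuotientGroup.mk' Y0) Y0 = ⊥ := by
            rw [Subgroup.map_eq_bot_iff, QuotientGroup.ker_mk']
          rw [hb, sup_bot_eq]
        have hs1 : Group.IsSolvable ↥(Subgroup.map (QuotientGroup.mk' Y0) (X (k + 1))) :=
          solvable_of_surjective (MonoidHom.subgroupMap_surjective _ _)
        have hs2 : Group.IsSolvable ↥(Subgroup.map (QuotientGroup.mk' (X 1)) (X (k + 1 + 1))) := by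
          rw [← h.compat (k + 1) hk, h1, MulEquiv.toMonoidHom_eq_coe]
          exact solvable_of_surjective (f := (MulEquiv.subgroupMap φ _).toMonoidHom)
            (by rw [MulEquiv.coe_toMonoidHom]; exact (MulEquiv.subgroupMap φ _).surjective)
        have hle : X 1 ≤ X (k + 1 + 1) := hmono (by omega)
        refine solvable_of_ker_le_range (Subgroup.inclusion hle)
          ((QuotientGroup.mk' (X 1)).subgroupMap (X (k + 1 + 1))) ?_
        intro x hx
        have hx' : (QuotientGroup.mk' (X 1)) (x : G) = 1 := congrArg Subtype.val hx
        have hx1 : (x : G) ∈ X 1 := (QuotientGroup.eq_one_iff _).mp hx'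
        exact ⟨⟨(x : G), hx1⟩, rfl⟩
    have htop : Group.IsSolvable ↥(X (ℓ + 1)) := key ℓ le_rfl
    rw [h.top_eq] at htop
    exact solvable_of_surjective (f := (Subgroup.topEquiv : (⊤ : Subgroup G) ≃* G).toMonoidHom)
      (by rw [MulEquiv.coe_toMonoidHom]; exact Subgroup.topEquiv.surjective)
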